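/- Let Γ be a finite simple graph with vertex set V = {1, …, n}, let X = {i, j, k} be a 3-clique of Γ, and let H be the subgroup of P_Γ generated by the three elements a_{ij}, a_{ik}, a_{jk}. If g ∈ P_Γ commutes with at least two of the three elements a_{ij}, a_{ik}, a_{jk}, then g commutes with every element of the commutator subgroup [H, H]. -/

import Mathlib

abbrev PBIdx (n : ℕ) : Type := {p : Fin n × Fin n // p.1 < p.2}

namespace GraphicBraid

open scoped commutatorElement

def ofIdx {n : ℕ} {i j : Fin n} (h : i < j) : FreeGroup (PBIdx n) :=
  FreeGroup.of ⟨(i, j), h⟩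

/-- The Artin relators for the pure braid group `P_n`. -/
def pureBraidRels (n : ℕ) : Set (FreeGroup (PBIdx n)) :=
  {w | ∃ (i j r s : Fin n) (hij : i < j) (hrs : r < s),
      (s < i ∨ (i < r ∧ s < j)) ∧ w = ⁅ofIdx hij, ofIdx hrs⁆} ∪
  {w | ∃ (r i s j : Fin n) (hri : r < i) (his : i < s) (hsj : s < j),
      w = ⁅ofIdx (his.trans hsj), ofIdx hsj * ofIdx (hri.trans his) * (ofIdx hsj)⁻¹⁆} ∪
  {w | ∃ (i j r : Fin n) (hij : i < j) (hjr : j < r),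
      w = ⁅ofIdx hij * ofIdx (hij.trans hjr), ofIdx hjr⁆ ∨
      w = ⁅ofIdx hij, ofIdx (hij.trans hjr) * ofIdx hjr⁆}

/-- Relators killing the generators corresponding to non-edges of `Γ`. -/
def nonEdgeRels {n : ℕ} (Γ : SimpleGraph (Fin n)) : Set (FreeGroup (PBIdx n)) :=
  {w | ∃ p : PBIdx n, ¬ Γ.Adj p.1.1 p.1.2 ∧ w = FreeGroup.of p}

def graphicRels {n : ℕ} (Γ : SimpleGraph (Fin n)) : Set (FreeGroup (PBIdx n)) :=
  pureBraidRels n ∪ nonEdgeRels Γ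

/-- The graphic pure braid group `P_Γ`. -/
abbrev GPB {n : ℕ} (Γ : SimpleGraph (Fin n)) : Type := PresentedGroup (graphicRels Γ)

/-- The image of the Artin generator `a_{ij}` in `P_Γ`. -/
def agen {n : ℕ} (Γ : SimpleGraph (Fin n)) {i j : Fin n} (h : i < j) : GPB Γ :=
  PresentedGroup.of (rels := graphicRels Γ) ⟨(i, j), h⟩

/-- Relators killing the generators `a_{ij}` with `{i,j} ⊄ X`. -/
def killRels {n : ℕ} (X : Set (Fin n)) : Set (FreeGroup (PBIdx n)) :=
  {w | ∃ p : PBIdx n, ¬ (p.1.1 ∈ X ∧ p.1.2 ∈ X) ∧ w = FreeGroup.of p}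

/-- The quotient `P_X` of `P_Γ` obtained by killing all generators `a_{ij}` with `{i,j} ⊄ X`. -/
abbrev GPBX {n : ℕ} (Γ : SimpleGraph (Fin n)) (X : Set (Fin n)) : Type :=
  PresentedGroup (graphicRels Γ ∪ killRels X)

/-- The canonical surjection between presented groups when the set of relators grows. -/
def quotMap {α : Type*} {R S : Set (FreeGroup α)} (h : R ⊆ S) :
    PresentedGroup R →* PresentedGroup S :=
  QuotientGroup.map _ _ (MonoidHom.id _)
    (fun _ hx => Subgroup.normalClosure_mono h hx)

/-- The quotient map `ρ_X : P_Γ → P_X`. -/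
def rho {n : ℕ} (Γ : SimpleGraph (Fin n)) (X : Set (Fin n)) : GPB Γ →* GPBX Γ X :=
  quotMap Set.subset_union_left

lemma killRels_anti {n : ℕ} {X Y : Set (Fin n)} (h : X ⊆ Y) : killRels Y ⊆ killRels X := by
  rintro w ⟨p, hp, rfl⟩
  exact ⟨p, fun hx => hp ⟨h hx.1, h hx.2⟩, rfl⟩

/-- The quotient map `P_Y → P_X` for `X ⊆ Y`. -/
def rhoDown {n : ℕ} (Γ : SimpleGraph (Fin n)) {X Y : Set (Fin n)} (h : X ⊆ Y) :
    GPBX Γ Y →* GPBX Γ X :=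
  quotMap (Set.union_subset_union_right _ (killRels_anti h))

/-- `X` is a maximal clique of `Γ`. -/
def MaxClique {n : ℕ} (Γ : SimpleGraph (Fin n)) (X : Set (Fin n)) : Prop :=
  Γ.IsClique X ∧ ∀ Y : Set (Fin n), Γ.IsClique Y → X ⊆ Y → Y = X


/-- The subgroup of `P_Γ` generated by the generators `a_{ij}` with `{i,j} ⊆ X`. -/
def cliqueSubgroup {n : ℕ} (Γ : SimpleGraph (Fin n)) (X : Set (Fin n)) : Subgroup (GPB Γ) :=
  Subgroup.closure {g : GPB Γ | ∃ p : PBIdx n, (p.1.1 ∈ X ∧ p.1.2 ∈ X) ∧ g = PresentedGroup.of p}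

/-- The bipartite incidence graph of edges and 3-cliques (triangles) of `Γ`. -/
def incidenceGraph {n : ℕ} (Γ : SimpleGraph (Fin n)) :
    SimpleGraph (Γ.edgeSet ⊕ {T : Finset (Fin n) // Γ.IsNClique 3 T}) where
  Adj x y :=
    match x, y with
    | Sum.inl e, Sum.inr T => ∀ v : Fin n, v ∈ (e : Sym2 (Fin n)) → v ∈ T.1
    | Sum.inr T, Sum.inl e => ∀ v : Fin n, v ∈ (e : Sym2 (Fin n)) → v ∈ T.1
    | _, _ => False
  symm := ⟨by rintro (e | T) (f | S) h <;> exact h⟩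
  loopless := ⟨by rintro (e | T) h <;> exact h⟩

lemma rel_one {n : ℕ} (Γ : SimpleGraph (Fin n)) {w : FreeGroup (PBIdx n)}
    (hw : w ∈ graphicRels Γ) : PresentedGroup.mk (graphicRels Γ) w = 1 :=
  (QuotientGroup.eq_one_iff w).mpr (Subgroup.subset_normalClosure hw)

lemma mk_ofIdx {n : ℕ} (Γ : SimpleGraph (Fin n)) {i j : Fin n} (h : i < j) :
    PresentedGroup.mk (graphicRels Γ) (ofIdx h) = agen Γ h := rfl

lemma commutator_mul_left {G : Type*} [Group G] {x a b : G}
    (hxa : Commute x a) (hxb : Commute x b) : ⁅x * a, b⁆ = ⁅a, b⁆ := by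
  have hc : Commute x ⁅a, b⁆ := by
    rw [commutatorElement_def, mul_assoc, mul_assoc]
    exact hxa.mul_right (hxb.mul_right (hxa.inv_right.mul_right hxb.inv_right))
  have : ⁅x * a, b⁆ = x * ⁅a, b⁆ * x⁻¹ := by
    rw [commutatorElement_def, commutatorElement_def, mul_inv_rev]
    have h1 : x⁻¹ * b⁻¹ = b⁻¹ * x⁻¹ := hxb.inv_inv.eq
    calc x * a * b * (a⁻¹ * x⁻¹) * b⁻¹ = x * (a * b * a⁻¹) * (x⁻¹ * b⁻¹) := by
          group
      _ = x * (a * b * a⁻¹) * (b⁻¹ * x⁻¹) := by rw [h1]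
      _ = x * (a * b * a⁻¹ * b⁻¹) * x⁻¹ := by group
  rw [this, hc.eq]; group

lemma commutator_mul_right {G : Type*} [Group G] {x a b : G}
    (hxa : Commute x a) (hxb : Commute x b) : ⁅a, x * b⁆ = ⁅a, b⁆ := by
  rw [← commutatorElement_inv, commutator_mul_left hxb hxa, commutatorElement_inv]

lemma helper {G : Type*} [Group G] {u v z g : G}
    (hzu : Commute z u) (hzv : Commute z v)
    (hgu : Commute g u) (hgv : Commute g v) :
    ∀ h1 ∈ Subgroup.closure ({u, v, z} : Set G),
      ∀ h2 ∈ Subgroup.closure ({u, v, z} : Set G), Commute g ⁅h1, h2⁆ := by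
  have hzK : ∀ w ∈ Subgroup.closure ({u, v} : Set G), Commute z w := by
    intro w hw
    induction hw using Subgroup.closure_induction with
    | mem x hx => rcases hx with rfl | rfl
                  · exact hzu
                  · exact hzv
    | one => exact Commute.one_right z
    | mul x y _ _ hx hy => exact hx.mul_right hy
    | inv x _ hx => exact hx.inv_right
  have hgK : ∀ w ∈ Subgroup.closure ({u, v} : Set G), Commute g w := by
    intro w hw
    induction hw using Subgroup.closure_induction with
    | mem x hx => rcases hx with rfl | rfl
                  · exact hgu
                  · exact hgv
    | one => exact Commute.one_right g
    | mul x y _ _ hx hy => exact hx.mul_right hy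
    | inv x _ hx => exact hx.inv_right
  have decomp : ∀ h ∈ Subgroup.closure ({u, v, z} : Set G),
      ∃ m : ℤ, ∃ w ∈ Subgroup.closure ({u, v} : Set G), h = z ^ m * w := by
    intro h hh
    induction hh using Subgroup.closure_induction with
    | mem x hx =>
        rcases hx with rfl | rfl | rfl
        · exact ⟨0, x, Subgroup.subset_closure (Or.inl rfl), by simp⟩
        · exact ⟨0, x, Subgroup.subset_closure (Or.inr rfl), by simp⟩
        · exact ⟨1, 1, one_mem _, by simp⟩
    | one => exact ⟨0, 1, one_mem _, by simp⟩
    | mul x y _ _ hx hy =>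
        obtain ⟨m, w, hw, rfl⟩ := hx
        obtain ⟨l, w', hw', rfl⟩ := hy
        refine ⟨m + l, w * w', mul_mem hw hw', ?_⟩
        have hc : Commute (z ^ l) w := (hzK w hw).zpow_left l
        rw [zpow_add]
        calc z ^ m * w * (z ^ l * w') = z ^ m * (w * z ^ l) * w' := by group
          _ = z ^ m * (z ^ l * w) * w' := by rw [← hc.eq]
          _ = z ^ m * z ^ l * (w * w') := by group
    | inv x _ hx =>
        obtain ⟨m, w, hw, rfl⟩ := hx
        refine ⟨-m, w⁻¹, inv_mem hw, ?_⟩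
        have hc : Commute (z ^ (-m)) w⁻¹ := ((hzK w hw).zpow_left (-m)).inv_right
        rw [mul_inv_rev, ← zpow_neg, ← hc.eq]
  intro h1 hh1 h2 hh2
  obtain ⟨m, w1, hw1, rfl⟩ := decomp h1 hh1
  obtain ⟨l, w2, hw2, rfl⟩ := decomp h2 hh2
  have e1 : ⁅z ^ m * w1, z ^ l * w2⁆ = ⁅w1, w2⁆ := by
    rw [commutator_mul_left ((hzK w1 hw1).zpow_left m)
        (((Commute.refl z).zpow_zpow m l).mul_right ((hzK w2 hw2).zpow_left m)),
      commutator_mul_right ((hzK w1 hw1).zpow_left l) ((hzK w2 hw2).zpow_left l)]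
  rw [e1, commutatorElement_def, mul_assoc, mul_assoc]
  exact (hgK w1 hw1).mul_right ((hgK w2 hw2).mul_right
    ((hgK w1 hw1).inv_right.mul_right (hgK w2 hw2).inv_right))

/-- If `X = {i,j,k}` is a `3`-clique of `Γ` and `g ∈ P_Γ` commutes with at
least two of the three generators `a_{ij}, a_{ik}, a_{jk}`, then `g` commutes with every element
of the commutator subgroup `[H, H]`, where `H = ⟨a_{ij}, a_{ik}, a_{jk}⟩`. -/
theorem two_of_three_commute {n : ℕ} (Γ : SimpleGraph (Fin n)) {i j k : Fin n}
    (hij : i < j) (hjk : j < k)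
    (eij : Γ.Adj i j) (eik : Γ.Adj i k) (ejk : Γ.Adj j k)
    (g : GPB Γ)
    (hcomm : (Commute g (agen Γ hij) ∧ Commute g (agen Γ (hij.trans hjk))) ∨
             (Commute g (agen Γ hij) ∧ Commute g (agen Γ hjk)) ∨
             (Commute g (agen Γ (hij.trans hjk)) ∧ Commute g (agen Γ hjk))) :
    ∀ x ∈ ⁅Subgroup.closure {agen Γ hij, agen Γ (hij.trans hjk), agen Γ hjk},
           Subgroup.closure {agen Γ hij, agen Γ (hij.trans hjk), agen Γ hjk}⁆,
      Commute g x := by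
  set a := agen Γ hij with ha
  set b := agen Γ (hij.trans hjk) with hb
  set c := agen Γ hjk with hc
  -- the two pure braid relations for the triple i < j < k
  have hrel1 : ⁅ofIdx hij * ofIdx (hij.trans hjk), ofIdx hjk⁆ ∈ graphicRels Γ :=
    Or.inl (Or.inr ⟨i, j, k, hij, hjk, Or.inl rfl⟩)
  have hrel2 : ⁅ofIdx hij, ofIdx (hij.trans hjk) * ofIdx hjk⁆ ∈ graphicRels Γ :=
    Or.inl (Or.inr ⟨i, j, k, hij, hjk, Or.inr rfl⟩)
  have key1 : Commute (a * b) c := by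
    rw [← commutatorElement_eq_one_iff_commute]
    have := rel_one Γ hrel1
    rwa [map_commutatorElement, map_mul, mk_ofIdx, mk_ofIdx, mk_ofIdx] at this
  have key2 : Commute a (b * c) := by
    rw [← commutatorElement_eq_one_iff_commute]
    have := rel_one Γ hrel2
    rwa [map_commutatorElement, map_mul, mk_ofIdx, mk_ofIdx, mk_ofIdx] at this
  set z := a * b * c with hz
  have hza : Commute z a := by
    have : Commute (a * (b * c)) a := Commute.mul_left (Commute.refl a) key2.symm
    rwa [← mul_assoc] at this
  have hzc : Commute z c := Commute.mul_left key1 (Commute.refl c)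
  have hzb : Commute z b := by
    have hbe : b = a⁻¹ * z * c⁻¹ := by rw [hz]; group
    rw [hbe]
    exact (hza.inv_right.mul_right (Commute.refl z)).mul_right hzc.inv_right
  have hH : ∀ u v : GPB Γ, Commute z u → Commute z v → Commute g u → Commute g v →
      ({a, b, c} : Set (GPB Γ)) ⊆ ↑(Subgroup.closure ({u, v, z} : Set (GPB Γ))) →
      ∀ x ∈ ⁅Subgroup.closure ({a, b, c} : Set (GPB Γ)),
          Subgroup.closure ({a, b, c} : Set (GPB Γ))⁆, Commute g x := by
    intro u v hzu hzv hgu hgv hsub x hx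
    have hle : Subgroup.closure ({a, b, c} : Set (GPB Γ)) ≤
        Subgroup.closure ({u, v, z} : Set (GPB Γ)) :=
      (Subgroup.closure_le _).mpr hsub
    have hcen : ⁅Subgroup.closure ({a, b, c} : Set (GPB Γ)),
        Subgroup.closure ({a, b, c} : Set (GPB Γ))⁆ ≤ Subgroup.centralizer {g} := by
      rw [Subgroup.commutator_le]
      intro g1 hg1 g2 hg2
      rw [Subgroup.mem_centralizer_iff]
      rintro s hs
      rcases hs with rfl
      exact (helper hzu hzv hgu hgv g1 (hle hg1) g2 (hle hg2)).eq
    have := hcen hx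
    rw [Subgroup.mem_centralizer_iff] at this
    exact (this g rfl)
  rcases hcomm with ⟨hga, hgb⟩ | ⟨hga, hgc⟩ | ⟨hgb, hgc⟩
  · refine hH a b hza hzb hga hgb ?_
    rintro x (rfl | rfl | rfl)
    · exact Subgroup.subset_closure (Or.inl rfl)
    · exact Subgroup.subset_closure (Or.inr (Or.inl rfl))
    · have hce : c = b⁻¹ * a⁻¹ * z := by rw [hz]; group
      rw [hce]
      exact mul_mem (mul_mem (inv_mem (Subgroup.subset_closure (Or.inr (Or.inl rfl))))
        (inv_mem (Subgroup.subset_closure (Or.inl rfl))))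
        (Subgroup.subset_closure (Or.inr (Or.inr rfl)))
  · refine hH a c hza hzc hga hgc ?_
    rintro x (rfl | rfl | rfl)
    · exact Subgroup.subset_closure (Or.inl rfl)
    · have hbe : b = a⁻¹ * z * c⁻¹ := by rw [hz]; group
      rw [hbe]
      exact mul_mem (mul_mem (inv_mem (Subgroup.subset_closure (Or.inl rfl)))
        (Subgroup.subset_closure (Or.inr (Or.inr rfl))))
        (inv_mem (Subgroup.subset_closure (Or.inr (Or.inl rfl))))
    · exact Subgroup.subset_closure (Or.inr (Or.inl rfl))
  · refine hH b c hzb hzc hgb hgc ?_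
    rintro x (rfl | rfl | rfl)
    · have hae : a = z * c⁻¹ * b⁻¹ := by rw [hz]; group
      rw [hae]
      exact mul_mem (mul_mem (Subgroup.subset_closure (Or.inr (Or.inr rfl)))
        (inv_mem (Subgroup.subset_closure (Or.inr (Or.inl rfl)))))
        (inv_mem (Subgroup.subset_closure (Or.inl rfl)))
    · exact Subgroup.subset_closure (Or.inl rfl)
    · exact Subgroup.subset_closure (Or.inr (Or.inl rfl))

end GraphicBraid
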